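/- For α ∈ L, the symmetric k-bilinear form on L given by (x, y) ↦ θ*_{n−1}(α·x·y) is nondegenerate if and only if α is a unit of L. -/

import Mathlib

lemma stmt_17_aux (k : Type*) [Field k] (f : Polynomial k) (hf : f.Monic)
    (hn : 1 ≤ f.natDegree)
    (coeffTop : AdjoinRoot f →ₗ[k] k)
    (hct1 : coeffTop (AdjoinRoot.root f ^ (f.natDegree - 1)) = 1)
    (hct0 : ∀ i : ℕ, i < f.natDegree - 1 → coeffTop (AdjoinRoot.root f ^ i) = 0)
    (z : AdjoinRoot f) (hz : ∀ y : AdjoinRoot f, coeffTop (z * y) = 0) : z = 0 := by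
  by_contra h0
  obtain ⟨p, hp⟩ := AdjoinRoot.mk_surjective z
  set q : Polynomial k := p %ₘ f with hqdef
  have hq : AdjoinRoot.mk f q = z := by
    rw [hqdef, Polynomial.modByMonic_eq_sub_mul_div p f, map_sub, map_mul,
      AdjoinRoot.mk_self, zero_mul, sub_zero, hp]
  have hqne : q ≠ 0 := by
    intro h
    exact h0 (by rw [← hq, h, map_zero])
  have hflt : f.degree = (f.natDegree : WithBot ℕ) := Polynomial.degree_eq_natDegree hf.ne_zero
  have hdlt : q.natDegree < f.natDegree :=
    Polynomial.natDegree_lt_natDegree hqne (Polynomial.degree_modByMonic_lt p hf)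
  set d : ℕ := q.natDegree with hd
  set r : Polynomial k := q * Polynomial.X ^ (f.natDegree - 1 - d) with hr
  have hdle : d ≤ f.natDegree - 1 := by omega
  have hzy : z * AdjoinRoot.root f ^ (f.natDegree - 1 - d) = AdjoinRoot.mk f r := by
    rw [hr, map_mul, map_pow, AdjoinRoot.mk_X, hq]
  have hrdeg : r.natDegree < f.natDegree := by
    rw [hr, Polynomial.natDegree_mul hqne (pow_ne_zero _ Polynomial.X_ne_zero),
      Polynomial.natDegree_X_pow]
    omega
  have hexpand : AdjoinRoot.mk f r =
      ∑ i ∈ Finset.range f.natDegree, r.coeff i • AdjoinRoot.root f ^ i := by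
    conv_lhs => rw [Polynomial.as_sum_range' r f.natDegree hrdeg]
    rw [map_sum]
    refine Finset.sum_congr rfl fun i _ => ?_
    rw [← Polynomial.C_mul_X_pow_eq_monomial, map_mul, map_pow, AdjoinRoot.mk_X,
      AdjoinRoot.mk_C, Algebra.smul_def]
    rfl
  have hcoeff : coeffTop (AdjoinRoot.mk f r) = r.coeff (f.natDegree - 1) := by
    rw [hexpand, map_sum]
    simp_rw [map_smul]
    rw [Finset.sum_eq_single (f.natDegree - 1)]
    · rw [hct1, smul_eq_mul, mul_one]
    · intro i hi hne
      have : i < f.natDegree - 1 := by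
        have := Finset.mem_range.mp hi; omega
      rw [hct0 i this, smul_zero]
    · intro hni
      exact absurd (Finset.mem_range.mpr (by omega)) hni
  have hrc : r.coeff (f.natDegree - 1) = q.leadingCoeff := by
    have : f.natDegree - 1 = d + (f.natDegree - 1 - d) := by omega
    rw [this, hr, Polynomial.coeff_mul_X_pow, Polynomial.leadingCoeff]
  have := hz (AdjoinRoot.root f ^ (f.natDegree - 1 - d))
  rw [hzy, hcoeff, hrc] at this
  exact Polynomial.leadingCoeff_ne_zero.mpr hqne this

/-- Let `L = k[t]/(f)` with `f` monic separable of degree `n ≥ 1` and `θ` the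
image of `t`. For `α ∈ L`, the symmetric bilinear form `(x, y) ↦ θ*_{n-1}(α x y)` on `L` is
nondegenerate if and only if `α` is a unit of `L`. -/
theorem stmt_17 (k : Type*) [Field k] (f : Polynomial k) (hf : f.Monic)
    (hsep : f.Separable) (hn : 1 ≤ f.natDegree)
    (coeffTop : AdjoinRoot f →ₗ[k] k)
    (hct1 : coeffTop (AdjoinRoot.root f ^ (f.natDegree - 1)) = 1)
    (hct0 : ∀ i : ℕ, i < f.natDegree - 1 → coeffTop (AdjoinRoot.root f ^ i) = 0)
    (α : AdjoinRoot f) :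
    (∀ x : AdjoinRoot f, (∀ y : AdjoinRoot f, coeffTop (α * x * y) = 0) → x = 0) ↔
      IsUnit α := by
  constructor
  · intro h
    haveI : Module.Finite k (AdjoinRoot f) := (AdjoinRoot.powerBasis' hf).finite
    have hinj : Function.Injective (LinearMap.mulLeft k α) := by
      rw [injective_iff_map_eq_zero]
      intro x hx
      apply h x
      intro y
      have hax : α * x = 0 := hx
      rw [hax, zero_mul, map_zero]
    obtain ⟨x, hx⟩ := (LinearMap.injective_iff_surjective).mp hinj 1
    exact IsUnit.of_mul_eq_one (a := α) x (by simpa using hx)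
  · intro hα x hx
    have hz : α * x = 0 :=
      stmt_17_aux k f hf hn coeffTop hct1 hct0 (α * x) fun y => by
        exact hx y
    have h1 : (↑hα.unit⁻¹ : AdjoinRoot f) * (α * x) = x := by
      rw [← mul_assoc, IsUnit.val_inv_mul, one_mul]
    rw [hz, mul_zero] at h1
    exact h1.symm
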